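/- arXiv:1507.00989 — 4 statements merged into one kernel-verified Lean document; each statement's English description precedes it below -/
import Mathlib

section
/- A homeomorphism f of a compact metric space X has the pseudo-orbit tracing property if and only if every point of X is shadowable. -/
open Metric Set

/-- Natural iterates of a homeomorphism. -/
def hnpow {X : Type*} [TopologicalSpace X] (f : X ≃ₜ X) : ℕ → X ≃ₜ X
  | 0 => Homeomorph.refl X
  | n+1 => (hnpow f n).trans f

/-- Integer iterates `fⁿ`, `n ∈ ℤ`, of a homeomorphism. -/
def hpow {X : Type*} [TopologicalSpace X] (f : X ≃ₜ X) : ℤ → X ≃ₜ X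
  | Int.ofNat n => hnpow f n
  | Int.negSucc n => hnpow f.symm (n+1)

variable {X : Type*} [MetricSpace X]

/-- `ξ` is a `δ`-pseudo-orbit of `f`. -/
def IsPseudoOrbit (f : X ≃ₜ X) (δ : ℝ) (ξ : ℤ → X) : Prop :=
  ∀ n : ℤ, dist (f (ξ n)) (ξ (n+1)) ≤ δ

/-- `ξ` is `ε`-shadowed by the orbit of `y`. -/
def ShadowedBy (f : X ≃ₜ X) (ε : ℝ) (y : X) (ξ : ℤ → X) : Prop :=
  ∀ n : ℤ, dist (hpow f n y) (ξ n) ≤ ε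

/-- `x` is a shadowable point of `f`. -/
def ShadowablePoint (f : X ≃ₜ X) (x : X) : Prop :=
  ∀ ε > 0, ∃ δ > 0, ∀ ξ : ℤ → X, IsPseudoOrbit f δ ξ → ξ 0 = x →
    ∃ y, ShadowedBy f ε y ξ

/-- `f` has the pseudo-orbit tracing property. -/
def POTP (f : X ≃ₜ X) : Prop :=
  ∀ ε > 0, ∃ δ > 0, ∀ ξ : ℤ → X, IsPseudoOrbit f δ ξ → ∃ y, ShadowedBy f ε y ξ

/-- `x` is a nonwandering point of `f`. -/
def NonWandering (f : X ≃ₜ X) (x : X) : Prop :=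
  ∀ U ∈ nhds x, ∃ k : ℕ, 0 < k ∧ ((hpow f (k : ℤ)) '' U ∩ U).Nonempty

/-- `x` is a chain recurrent point of `f`. -/
def ChainRecurrent (f : X ≃ₜ X) (x : X) : Prop :=
  ∀ ρ > 0, ∃ n : ℕ, 0 < n ∧ ∃ c : ℕ → X, c 0 = x ∧ c n = x ∧
    ∀ i < n, dist (f (c i)) (c (i+1)) ≤ ρ

/-- `f` is distal: `inf_{n∈ℤ} d(fⁿ x, fⁿ y) > 0` for all distinct `x, y`. -/
def Distal (f : X ≃ₜ X) : Prop :=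
  ∀ x y : X, x ≠ y → ∃ c > 0, ∀ n : ℤ, c ≤ dist (hpow f n x) (hpow f n y)

/-- `f` is minimal: every full orbit is dense. -/
def MinimalHomeo (f : X ≃ₜ X) : Prop :=
  ∀ x : X, Dense (Set.range fun n : ℤ => hpow f n x)

/-- `f` is equicontinuous (uniformly, over all integer iterates). -/
def EquicontinuousHomeo (f : X ≃ₜ X) : Prop :=
  ∀ α > 0, ∃ β > 0, ∀ x y : X, dist x y ≤ β → ∀ n : ℤ, dist (hpow f n x) (hpow f n y) ≤ α

theorem stmt1 [CompactSpace X] (f : X ≃ₜ X) :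
    POTP f ↔ ∀ x : X, ShadowablePoint f x := by
  constructor
  · intro h x ε hε
    obtain ⟨δ, hδ, H⟩ := h ε hε
    exact ⟨δ, hδ, fun ξ hξ _ => H ξ hξ⟩
  · intro h ε hε
    have hε2 : (0:ℝ) < ε / 2 := by positivity
    choose δ hδ H using fun x => h x (ε/2) hε2
    have hf : UniformContinuous f := CompactSpace.uniformContinuous_of_continuous f.continuous
    rw [Metric.uniformContinuous_iff] at hf
    choose η hη Hη using fun x => hf (δ x / 2) (by have := hδ x; positivity)
    set r : X → ℝ := fun x => min (η x) (min (δ x / 2) (ε/2)) with hr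
    have hrpos : ∀ x, 0 < r x := fun x =>
      lt_min (hη x) (lt_min (by have := hδ x; positivity) hε2)
    rcases isEmpty_or_nonempty X with hX | hX
    · exact ⟨1, one_pos, fun ξ _ => (IsEmpty.false (ξ 0)).elim⟩
    obtain ⟨t, ht⟩ := IsCompact.elim_finite_subcover (isCompact_univ (X := X))
      (fun x => ball x (r x)) (fun x => isOpen_ball)
      (fun x _ => mem_iUnion.2 ⟨x, mem_ball_self (hrpos x)⟩)
    have htne : t.Nonempty := by
      by_contra hte
      rw [Finset.not_nonempty_iff_eq_empty] at hte
      obtain ⟨x⟩ := hX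
      have := ht (mem_univ x)
      simp [hte] at this
    set δ₀ := t.inf' htne (fun x => δ x / 2) with hδ₀def
    have hδ₀ : 0 < δ₀ := by
      rw [hδ₀def, Finset.lt_inf'_iff]
      intro x _
      have := hδ x; positivity
    refine ⟨δ₀, hδ₀, fun ξ hξ => ?_⟩
    obtain ⟨x, hxt, hx⟩ := mem_iUnion₂.1 (ht (mem_univ (ξ 0)))
    have hx' : dist (ξ 0) x < r x := mem_ball.1 hx
    have hδ₀x : δ₀ ≤ δ x / 2 := Finset.inf'_le _ hxt
    have hrη : r x ≤ η x := min_le_left _ _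
    have hrδ : r x ≤ δ x / 2 := le_trans (min_le_right _ _) (min_le_left _ _)
    have hrε : r x ≤ ε / 2 := le_trans (min_le_right _ _) (min_le_right _ _)
    set ξ' : ℤ → X := Function.update ξ 0 x with hξ'def
    have hξ'0 : ξ' 0 = x := Function.update_self 0 x ξ
    have hξ'ne : ∀ n : ℤ, n ≠ 0 → ξ' n = ξ n := fun n hn => Function.update_of_ne hn x ξ
    have hpo : IsPseudoOrbit f (δ x) ξ' := by
      intro n
      rcases eq_or_ne n 0 with rfl | hn
      · rw [hξ'0, hξ'ne (0+1) (by norm_num)]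
        have hd : dist (f x) (f (ξ 0)) < δ x / 2 := by
          apply Hη
          rw [dist_comm]
          exact lt_of_lt_of_le hx' hrη
        calc dist (f x) (ξ (0+1)) ≤ dist (f x) (f (ξ 0)) + dist (f (ξ 0)) (ξ (0+1)) :=
              dist_triangle _ _ _
          _ ≤ δ x / 2 + δ₀ := add_le_add hd.le (hξ 0)
          _ ≤ δ x := by linarith
      · rcases eq_or_ne (n+1) 0 with he | hne
        · rw [hξ'ne n hn, he, hξ'0]
          calc dist (f (ξ n)) x ≤ dist (f (ξ n)) (ξ (n+1)) + dist (ξ (n+1)) x :=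
                dist_triangle _ _ _
            _ ≤ δ₀ + r x := add_le_add (hξ n) (by rw [he]; exact hx'.le)
            _ ≤ δ x := by linarith
        · rw [hξ'ne n hn, hξ'ne (n+1) hne]
          exact le_trans (hξ n) (by linarith)
    obtain ⟨y, hy⟩ := H x ξ' hpo hξ'0
    refine ⟨y, fun n => ?_⟩
    rcases eq_or_ne n 0 with rfl | hn
    · calc dist (hpow f 0 y) (ξ 0) ≤ dist (hpow f 0 y) (ξ' 0) + dist (ξ' 0) (ξ 0) :=
          dist_triangle _ _ _
        _ ≤ ε / 2 + ε / 2 := by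
            refine add_le_add (hy 0) ?_
            rw [hξ'0, dist_comm]
            exact le_trans hx'.le hrε
        _ = ε := by ring
    · calc dist (hpow f n y) (ξ n) = dist (hpow f n y) (ξ' n) := by rw [hξ'ne n hn]
        _ ≤ ε / 2 := hy n
        _ ≤ ε := by linarith
end

section
/- Every chain recurrent shadowable point of a homeomorphism of a compact metric space is nonwandering: CR(f) ∩ Sh(f) ⊆ Ω(f). -/
open Metric Set

variable {X : Type*} [MetricSpace X]

theorem stmt5 [CompactSpace X] (f : X ≃ₜ X) :
    {x | ChainRecurrent f x} ∩ {x | ShadowablePoint f x} ⊆ {x | NonWandering f x} := by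
  rintro x ⟨hcr, hsh⟩ U hU
  obtain ⟨ε, hε, hball⟩ := Metric.mem_nhds_iff.1 hU
  obtain ⟨δ, hδ, hshad⟩ := hsh (ε/2) (by linarith)
  obtain ⟨n, hn, c, hc0, hcn, hc⟩ := hcr δ hδ
  have hnZ : (0:ℤ) < (n:ℤ) := by exact_mod_cast hn
  set ξ : ℤ → X := fun k => c ((k % (n:ℤ)).toNat) with hξ
  have hmod : ∀ k : ℤ, 0 ≤ k % (n:ℤ) ∧ k % (n:ℤ) < (n:ℤ) := fun k =>
    ⟨Int.emod_nonneg k (by omega), Int.emod_lt_of_pos k hnZ⟩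
  have hpo : IsPseudoOrbit f δ ξ := by
    intro k
    obtain ⟨h1, h2⟩ := hmod k
    set i : ℕ := (k % (n:ℤ)).toNat with hi
    have hiz : (i : ℤ) = k % (n:ℤ)  := Int.toNat_of_nonneg h1
    have hin : i < n := by omega
    have hmod1 : (k+1) % (n:ℤ) = ((i:ℤ)+1) % (n:ℤ) := by
      rw [hiz, Int.add_emod k 1, Int.add_emod (k%(n:ℤ)) 1, Int.emod_emod_of_dvd _ dvd_rfl]
    by_cases hcase : i + 1 < n
    · have : ((k+1) % (n:ℤ)).toNat = i + 1 := by
        rw [hmod1, Int.emod_eq_of_lt (by positivity) (by exact_mod_cast hcase)]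
        omega
      simp only [hξ, this]
      exact hc i hin
    · have hieq : i + 1 = n := by omega
      have : ((k+1) % (n:ℤ)).toNat = 0 := by
        rw [hmod1]
        have : ((i:ℤ)+1) = (n:ℤ) := by exact_mod_cast hieq
        rw [this, Int.emod_self]
        rfl
      simp only [hξ, this, hc0]
      have := hc i hin
      rwa [hieq, hcn] at this
  have hξ0 : ξ 0 = x := by
    simp only [hξ, Int.zero_emod, Int.toNat_zero, hc0]
  obtain ⟨y, hy⟩ := hshad ξ hpo hξ0
  refine ⟨n, hn, (hpow f (n:ℤ)) y, ⟨y, ?_, rfl⟩, ?_⟩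
  · have := hy 0
    rw [hξ0] at this
    have h0 : hpow f 0 y = y := rfl
    rw [h0] at this
    exact hball (by simp [Metric.mem_ball, dist_comm] at *; linarith)
  · have := hy (n:ℤ)
    have hxn : ξ (n:ℤ) = x := by
      simp only [hξ, Int.emod_self, Int.toNat_zero, hc0]
    rw [hxn] at this
    exact hball (by simp [Metric.mem_ball] at *; linarith)
end

section
/- If every chain recurrent point of a homeomorphism f of a compact metric space is shadowable, then the chain recurrent set equals the nonwandering set: CR(f) = Ω(f). -/
open Metric Set

variable {X : Type*} [MetricSpace X]

lemma hpow_natCast {X : Type*} [TopologicalSpace X] (f : X ≃ₜ X) (n : ℕ) :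
    hpow f (n : ℤ) = hnpow f n := rfl

lemma hnpow_succ_apply {X : Type*} [TopologicalSpace X] (f : X ≃ₜ X) (n : ℕ) (x : X) :
    hnpow f (n+1) x = f (hnpow f n x) := rfl

lemma hpow_nat_succ {X : Type*} [TopologicalSpace X] (f : X ≃ₜ X) (n : ℕ) (x : X) :
    hpow f ((n+1 : ℕ) : ℤ) x = f (hpow f (n : ℤ) x) := rfl

theorem stmt6 [CompactSpace X] (f : X ≃ₜ X)
    (h : ∀ x : X, ChainRecurrent f x → ShadowablePoint f x) :
    {x | ChainRecurrent f x} = {x | NonWandering f x} := by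
  ext x
  simp only [mem_setOf_eq]
  constructor
  · -- CR ⊆ Ω using shadowing
    intro hcr U hU
    obtain ⟨ε, εpos, hball⟩ := Metric.mem_nhds_iff.mp hU
    obtain ⟨δ, δpos, hsh⟩ := h x hcr (ε/2) (by linarith)
    obtain ⟨n, npos, c, hc0, hcn, hchain⟩ := hcr δ δpos
    have hnZ : (0:ℤ) < n := by exact_mod_cast npos
    set ξ : ℤ → X := fun m => c ((m % (n:ℤ)).toNat) with hξ
    have hmod : ∀ m : ℤ, ((m % (n:ℤ)).toNat) < n := by
      intro m
      have h1 := Int.emod_nonneg m (by omega : (n:ℤ) ≠ 0)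
      have h2 := Int.emod_lt_of_pos m hnZ
      omega
    have hstep : ∀ m : ℤ, ξ (m+1) = c (((m % (n:ℤ)).toNat) + 1) := by
      intro m
      have h1 := Int.emod_nonneg m (by omega : (n:ℤ) ≠ 0)
      have h2 := Int.emod_lt_of_pos m hnZ
      have hadd : (m+1) % (n:ℤ) = (m % n + 1) % n := (Int.emod_add_emod m n 1).symm
      by_cases hcase : m % (n:ℤ) + 1 < n
      · have : (m+1) % (n:ℤ) = m % n + 1 := by
          rw [hadd, Int.emod_eq_of_lt (by omega) hcase]
        simp only [hξ, this]
        congr 1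
        omega
      · have heq : m % (n:ℤ) + 1 = n := by omega
        have : (m+1) % (n:ℤ) = 0 := by
          rw [hadd, heq, Int.emod_self]
        simp only [hξ, this]
        have : ((m % (n:ℤ)).toNat) + 1 = n := by omega
        rw [this, hcn, Int.toNat_zero, hc0]
    have hpo : IsPseudoOrbit f δ ξ := fun m => by
      rw [hstep m]; exact hchain _ (hmod m)
    have hξ0 : ξ 0 = x := by
      simp only [hξ]
      rw [Int.zero_emod, Int.toNat_zero, hc0]
    obtain ⟨y, hy⟩ := hsh ξ hpo hξ0
    refine ⟨n, npos, ⟨hpow f (n:ℤ) y, ⟨y, ?_, rfl⟩, ?_⟩⟩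
    · apply hball
      have h0 := hy 0
      rw [hξ0] at h0
      have : hpow f 0 y = y := rfl
      rw [this] at h0
      rw [mem_ball]
      linarith
    · apply hball
      have hn := hy (n:ℤ)
      have : ξ (n:ℤ) = x := by
        simp only [hξ]
        rw [Int.emod_self, Int.toNat_zero, hc0]
      rw [this] at hn
      rw [mem_ball]
      linarith
  · -- Ω ⊆ CR (no hypothesis needed)
    intro hnw ρ ρpos
    obtain ⟨δc, δcpos, hδc⟩ := Metric.continuousAt_iff.mp (f.continuous.continuousAt (x := x))
      (ρ/2) (by linarith)
    set ρ' := min δc (ρ/2) with hρ'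
    have ρ'pos : 0 < ρ' := lt_min δcpos (by linarith)
    obtain ⟨k, kpos, p, hpim, hpU⟩ := hnw (ball x ρ') (ball_mem_nhds x ρ'pos)
    obtain ⟨w, hwU, rfl⟩ := hpim
    set c : ℕ → X := fun i => if i = 0 then x else if k ≤ i then x else hpow f (i:ℤ) w with hc
    refine ⟨k, kpos, c, by simp [hc], by simp [hc, kpos.ne'], ?_⟩
    intro i hik
    have hfw : dist (f x) (f w) < ρ/2 := by
      have : dist w x < δc := lt_of_lt_of_le (mem_ball.mp hwU) (min_le_left _ _)
      have := hδc this
      rwa [dist_comm] at this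
    have hlast : dist (hpow f (k:ℤ) w) x < ρ' := mem_ball.mp hpU
    rcases Nat.eq_zero_or_pos i with rfl | hipos
    · -- i = 0
      have hc0' : c 0 = x := by simp [hc]
      rcases eq_or_lt_of_le (Nat.one_le_iff_ne_zero.mpr kpos.ne') with hk1 | hk2
      · -- k = 1
        have hc1 : c 1 = x := by simp [hc, ← hk1]
        rw [zero_add, hc0', hc1]
        have hfw1 : dist (f w) x < ρ' := by
          have : hpow f ((1:ℕ):ℤ) w = f w := rfl
          rw [← this, hk1]; exact hlast
        calc dist (f x) x ≤ dist (f x) (f w) + dist (f w) x := dist_triangle _ _ _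
          _ ≤ ρ/2 + ρ' := add_le_add hfw.le hfw1.le
          _ ≤ ρ/2 + ρ/2 := by have := min_le_right δc (ρ/2); linarith
          _ = ρ := by ring
      · -- k ≥ 2
        have hc1 : c 1 = f w := by
          simp only [hc]
          rw [if_neg one_ne_zero, if_neg (by omega)]
          rfl
        rw [zero_add, hc0', hc1]
        have := min_le_right δc (ρ/2)
        linarith
    · -- 1 ≤ i < k
      have hci : c i = hpow f (i:ℤ) w := by
        simp only [hc]
        rw [if_neg hipos.ne', if_neg (by omega)]
      rcases eq_or_lt_of_le (Nat.succ_le_of_lt hik) with hlast' | hmid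
      · -- i + 1 = k
        have hk' : i + 1 = k := hlast'
        have hck : c (i+1) = x := by
          simp only [hc]; rw [if_neg (by omega), if_pos (le_of_eq hk'.symm)]
        rw [hci, hck, ← hpow_nat_succ, hk']
        have := min_le_right δc (ρ/2)
        linarith
      · -- i + 1 < k
        have hci1 : c (i+1) = hpow f ((i+1:ℕ):ℤ) w := by
          simp only [hc]
          rw [if_neg (by omega), if_neg (by omega)]
        rw [hci, hci1, hpow_nat_succ, dist_self]
        linarith
end

section
/- A minimal homeomorphism of a compact connected metric space with more than one point has no shadowable points. -/
open Metric Set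

variable {X : Type*} [MetricSpace X]

section HpowAlgebra

variable {X : Type*} [TopologicalSpace X] (f : X ≃ₜ X)

lemma hnpow_succ (n : ℕ) (x : X) : hnpow f (n+1) x = f (hnpow f n x) := rfl

lemma hnpow_succ' (n : ℕ) (x : X) : hnpow f (n+1) x = hnpow f n (f x) := by
  induction n generalizing x with
  | zero => rfl
  | succ n ih =>
    calc hnpow f (n+1+1) x = f (hnpow f (n+1) x) := rfl
    _ = f (hnpow f n (f x)) := by rw [ih]
    _ = hnpow f (n+1) (f x) := rfl

lemma apply_hnpow_symm (n : ℕ) (x : X) :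
    f (hnpow f.symm n x) = hnpow f.symm n (f x) := by
  induction n generalizing x with
  | zero => rfl
  | succ n ih =>
    calc f (hnpow f.symm (n+1) x) = f (f.symm (hnpow f.symm n x)) := rfl
    _ = hnpow f.symm n x := f.apply_symm_apply _
    _ = f.symm (f (hnpow f.symm n x)) := (f.symm_apply_apply _).symm
    _ = f.symm (hnpow f.symm n (f x)) := by rw [ih]
    _ = hnpow f.symm (n+1) (f x) := rfl

lemma hpow_succ (n : ℤ) (x : X) : hpow f (n+1) x = f (hpow f n x) := by
  cases n with
  | ofNat k =>
    have h1 : (Int.ofNat k) + 1 = Int.ofNat (k+1) := rfl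
    rw [h1]; rfl
  | negSucc k =>
    cases k with
    | zero =>
      have h1 : Int.negSucc 0 + 1 = 0 := rfl
      rw [h1]
      exact (f.apply_symm_apply x).symm
    | succ k =>
      have h1 : Int.negSucc (k+1) + 1 = Int.negSucc k := rfl
      rw [h1]
      show hnpow f.symm (k+1) x = f (hnpow f.symm (k+2) x)
      calc hnpow f.symm (k+1) x
          = hnpow f.symm (k+1) (f (f.symm x)) := by rw [f.apply_symm_apply]
        _ = f (hnpow f.symm (k+1) (f.symm x)) := (apply_hnpow_symm f (k+1) _).symm
        _ = f (hnpow f.symm (k+2) x) := by rw [← hnpow_succ' f.symm (k+1) x]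

lemma hpow_zero (x : X) : hpow f 0 x = x := rfl

lemma hpow_one (x : X) : hpow f 1 x = f x := rfl

lemma hpow_pred (n : ℤ) (x : X) : hpow f (n-1) x = f.symm (hpow f n x) := by
  have h := hpow_succ f (n-1) x
  rw [show n - 1 + 1 = n from by ring] at h
  rw [h, f.symm_apply_apply]

lemma hpow_add (m n : ℤ) (x : X) : hpow f (m + n) x = hpow f m (hpow f n x) := by
  induction m using Int.induction_on with
  | zero => rw [zero_add]; rfl
  | succ k ih =>
    rw [show (k:ℤ)+1+n = (k+n)+1 from by ring, hpow_succ, ih]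
    exact (hpow_succ f k _).symm
  | pred k ih =>
    rw [show (-(k:ℤ))-1+n = (-k+n)-1 from by ring, hpow_pred, ih]
    exact (hpow_pred f (-k) _).symm

lemma image_hpow_add (m n : ℤ) (A : Set X) :
    hpow f (m+n) '' A = hpow f m '' (hpow f n '' A) := by
  rw [Set.image_image]
  exact Set.image_congr fun a _ => hpow_add f m n a

lemma image_hpow_zero (A : Set X) : hpow f (0:ℤ) '' A = A := by
  ext z
  constructor
  · rintro ⟨a, ha, rfl⟩; exact ha
  · intro hz; exact ⟨z, hz, rfl⟩

lemma image_hpow_neg (n : ℤ) {A : Set X} (hA : hpow f n '' A = A) :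
    hpow f (-n) '' A = A := by
  conv_lhs => rw [← hA, ← image_hpow_add]
  rw [show -n + n = 0 from by ring, image_hpow_zero]

lemma image_hpow_mul (k n : ℤ) {A : Set X} (hA : hpow f n '' A = A) :
    hpow f (k*n) '' A = A := by
  induction k using Int.induction_on with
  | zero => rw [zero_mul, image_hpow_zero]
  | succ k ih =>
    rw [show ((k:ℤ)+1)*n = n + k*n from by ring, image_hpow_add, ih, hA]
  | pred k ih =>
    rw [show ((-(k:ℤ))-1)*n = -n + (-k)*n from by ring, image_hpow_add, ih,
      image_hpow_neg f n hA]

lemma himg_iff (g : X ≃ₜ X) (C : Set X) : g '' C = C ↔ g ⁻¹' C = C := by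
  constructor
  · intro hI
    conv_lhs => rw [← hI]
    exact Set.preimage_image_eq C g.injective
  · intro hP
    conv_lhs => rw [← hP]
    exact Set.image_preimage_eq C g.surjective

end HpowAlgebra

section Dynamics

variable (f : X ≃ₜ X)

lemma closed_inv_eq_univ (h : MinimalHomeo f) {A : Set X}
    (hne : A.Nonempty) (hcl : IsClosed A) (hinv : f '' A = A) : A = univ := by
  obtain ⟨a, ha⟩ := hne
  have hmem : ∀ n : ℤ, hpow f n a ∈ A := by
    intro n
    induction n using Int.induction_on with
    | zero => exact ha
    | succ k ih =>
      rw [hpow_succ, ← hinv]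
      exact ⟨_, ih, rfl⟩
    | pred k ih =>
      rw [show (-(k:ℤ))-1 = (-(k:ℤ))-1 from rfl, hpow_pred]
      obtain ⟨w, hw, hwz⟩ : hpow f (-(k:ℤ)) a ∈ f '' A := by rw [hinv]; exact ih
      rw [← hwz, f.symm_apply_apply]
      exact hw
  have hsub : closure (range fun n : ℤ => hpow f n a) ⊆ A :=
    closure_minimal (range_subset_iff.mpr hmem) hcl
  rw [(h a).closure_eq] at hsub
  exact eq_univ_of_univ_subset hsub

lemma return_close [CompactSpace X] (h : MinimalHomeo f) (x : X) {δ : ℝ} (hδ : 0 < δ) :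
    ∃ P : ℕ, 0 < P ∧ dist (hpow f (P:ℤ) x) x ≤ δ := by
  set K : Set X := closure (range fun n : ℕ => hpow f ((n:ℤ)+1) x) with hK
  have hKcl : IsClosed K := isClosed_closure
  have hKcomp : IsCompact K := hKcl.isCompact
  have hKne : K.Nonempty := (range_nonempty _).closure
  have hfK : f '' K ⊆ K := by
    rw [hK, f.image_closure]
    apply closure_mono
    rintro _ ⟨_, ⟨n, rfl⟩, rfl⟩
    refine ⟨n+1, ?_⟩
    show hpow f (((n+1:ℕ):ℤ)+1) x = f (hpow f ((n:ℤ)+1) x)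
    rw [show ((n+1:ℕ):ℤ)+1 = ((n:ℤ)+1)+1 from by push_cast; ring, hpow_succ]
  set Z : ℕ → Set X := fun m => hpow f (m:ℤ) '' K with hZ
  have hZ0 : Z 0 = K := by
    simp only [hZ, Nat.cast_zero]
    exact image_hpow_zero f K
  have hsucc : ∀ m : ℕ, Z (m+1) = hpow f (m:ℤ) '' (f '' K) := by
    intro m
    simp only [hZ]
    rw [show ((m+1:ℕ):ℤ) = (m:ℤ) + 1 from by push_cast; ring, image_hpow_add]
    exact congrArg _ (Set.image_congr fun a _ => rfl)
  have hZdec : ∀ m, Z (m+1) ⊆ Z m := by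
    intro m
    rw [hsucc m]
    exact Set.image_mono hfK
  have hZne : ∀ m, (Z m).Nonempty := fun m => hKne.image _
  have hZcl : ∀ m, IsClosed (Z m) := fun m => (hpow f _).isClosedMap _ hKcl
  have hZ0c : IsCompact (Z 0) := by rw [hZ0]; exact hKcomp
  have hInt : (⋂ m, Z m).Nonempty :=
    IsCompact.nonempty_iInter_of_sequence_nonempty_isCompact_isClosed Z hZdec hZne hZ0c hZcl
  have hIinv : f '' (⋂ m, Z m) = ⋂ m, Z m := by
    apply subset_antisymm
    · rintro _ ⟨w, hw, rfl⟩
      refine Set.mem_iInter.mpr fun m => ?_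
      have hwm : w ∈ Z m := Set.mem_iInter.mp hw m
      obtain ⟨k, hk, hkw⟩ := hwm
      have : f w ∈ Z (m+1) := by
        rw [hsucc m]
        refine ⟨f k, ⟨k, hk, rfl⟩, ?_⟩
        rw [← hkw]
        calc hpow f (m:ℤ) (f k) = hpow f ((m:ℤ)+1) k := (hpow_add f m 1 k).symm
          _ = f (hpow f (m:ℤ) k) := hpow_succ f m k
      exact hZdec m this
    · intro z hz
      refine ⟨f.symm z, ?_, f.apply_symm_apply z⟩
      refine Set.mem_iInter.mpr fun m => ?_
      obtain ⟨k, hk, hkz⟩ := Set.mem_iInter.mp hz (m+1)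
      refine ⟨k, hk, ?_⟩
      rw [← hkz]
      calc hpow f (m:ℤ) k = hpow f (((m:ℤ)+1)-1) k := by norm_num
        _ = f.symm (hpow f ((m:ℤ)+1) k) := hpow_pred f _ k
        _ = f.symm (hpow f ((m+1:ℕ):ℤ) k) := by push_cast; ring_nf
  have huniv : (⋂ m, Z m) = univ :=
    closed_inv_eq_univ f h hInt (isClosed_iInter hZcl) hIinv
  have hxK : x ∈ K := by
    have hx0 : x ∈ ⋂ m, Z m := huniv ▸ mem_univ x
    have := Set.mem_iInter.mp hx0 0
    rwa [hZ0] at this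
  rw [hK, Metric.mem_closure_iff] at hxK
  obtain ⟨z, ⟨n, rfl⟩, hdz⟩ := hxK δ hδ
  refine ⟨n+1, Nat.succ_pos n, ?_⟩
  rw [show ((n+1:ℕ):ℤ) = (n:ℤ)+1 from by push_cast; ring, dist_comm]
  exact hdz.le

lemma exists_min_invariant [CompactSpace X] (g : X ≃ₜ X) (Λ : Set X)
    (hne : Λ.Nonempty) (hcl : IsClosed Λ) (hinv : g '' Λ = Λ) :
    ∃ A, A ⊆ Λ ∧ A.Nonempty ∧ IsClosed A ∧ g '' A = A ∧
      ∀ C, C ⊆ A → C.Nonempty → IsClosed C → g '' C = C → C = A := by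
  set S : Set (Set X) := {C | C ⊆ Λ ∧ C.Nonempty ∧ IsClosed C ∧ g ⁻¹' C = C} with hS
  have hΛS : Λ ∈ S := ⟨Subset.rfl, hne, hcl, (himg_iff g Λ).mp hinv⟩
  have H : ∀ c ⊆ S, IsChain (· ⊆ ·) c → c.Nonempty →
      ∃ lb ∈ S, ∀ s ∈ c, lb ⊆ s := by
    intro c hcS hchain hcne
    refine ⟨⋂₀ c, ⟨?_, ?_, ?_, ?_⟩, fun s hs => sInter_subset_of_mem hs⟩
    · obtain ⟨s, hs⟩ := hcne
      exact (sInter_subset_of_mem hs).trans (hcS hs).1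
    · haveI : Nonempty c := hcne.to_subtype
      apply IsCompact.nonempty_sInter_of_directed_nonempty_isCompact_isClosed
      · intro a ha b hb
        rcases eq_or_ne a b with rfl | hab
        · exact ⟨a, ha, Subset.rfl, Subset.rfl⟩
        rcases hchain ha hb hab with hle | hle
        · exact ⟨a, ha, Subset.rfl, hle⟩
        · exact ⟨b, hb, hle, Subset.rfl⟩
      · exact fun U hU => (hcS hU).2.1
      · exact fun U hU => (hcS hU).2.2.1.isCompact
      · exact fun U hU => (hcS hU).2.2.1
    · exact isClosed_sInter fun U hU => (hcS hU).2.2.1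
    · rw [Set.preimage_sInter, sInter_eq_biInter]
      exact Set.iInter₂_congr fun s hs => (hcS hs).2.2.2
  obtain ⟨m, hmsub, hm⟩ := zorn_superset_nonempty S H Λ hΛS
  obtain ⟨⟨hmΛ, hmne, hmcl, hminv⟩, hmmin⟩ := hm
  refine ⟨m, hmΛ, hmne, hmcl, (himg_iff g m).mpr hminv, ?_⟩
  intro C hCm hCne hCcl hCinv
  have hCS : C ∈ S := ⟨hCm.trans hmΛ, hCne, hCcl, (himg_iff g C).mp hCinv⟩
  exact subset_antisymm hCm (hmmin hCS hCm)

end Dynamics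

section MinSet

variable {Y' : Type*} [TopologicalSpace Y']

lemma f_image_hpow (f : Y' ≃ₜ Y') (i : ℤ) (A : Set Y') :
    f '' (hpow f i '' A) = hpow f (i+1) '' A := by
  rw [Set.image_image]
  exact Set.image_congr fun a _ => (hpow_succ f i a).symm

end MinSet

lemma min_set_univ [CompactSpace X] [ConnectedSpace X] (f : X ≃ₜ X) (h : MinimalHomeo f)
    (P : ℕ) : 0 < P → ∀ A : Set X, A.Nonempty → IsClosed A → hpow f (P:ℤ) '' A = A →
      (∀ C, C ⊆ A → C.Nonempty → IsClosed C → hpow f (P:ℤ) '' C = C → C = A) →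
      A = univ := by
  induction P using Nat.strong_induction_on with
  | _ P IH =>
  intro hP A hne hcl hinv hmin
  by_cases hA : A = univ
  · exact hA
  exfalso
  have hP0 : (0:ℤ) < (P:ℤ) := by exact_mod_cast hP
  have hmod : ∀ i : ℤ, hpow f i '' A = hpow f (i % (P:ℤ)) '' A := by
    intro i
    conv_lhs => rw [show i = i % (P:ℤ) + (i / (P:ℤ)) * (P:ℤ) from by
      rw [mul_comm]; exact (Int.emod_add_mul_ediv i (P:ℤ)).symm]
    rw [image_hpow_add, image_hpow_mul f (i / (P:ℤ)) (P:ℤ) hinv]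
  have hYfin : (⋃ i : ℤ, hpow f i '' A) = ⋃ i ∈ Finset.range P, hpow f ((i:ℕ):ℤ) '' A := by
    apply subset_antisymm
    · refine Set.iUnion_subset fun i => ?_
      rw [hmod i]
      have h0 : 0 ≤ i % (P:ℤ) := Int.emod_nonneg i hP0.ne'
      have hlt : i % (P:ℤ) < (P:ℤ) := Int.emod_lt_of_pos i hP0
      have hco : i % (P:ℤ) = (((i % (P:ℤ)).toNat : ℕ) : ℤ) := (Int.toNat_of_nonneg h0).symm
      rw [hco]
      have htn : (i % (P:ℤ)).toNat < P := by
        zify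
        rwa [Int.toNat_of_nonneg h0]
      exact Set.subset_iUnion₂ (s := fun (j : ℕ) (_ : j ∈ Finset.range P) =>
        hpow f ((j:ℕ):ℤ) '' A) (i % (P:ℤ)).toNat (Finset.mem_range.mpr htn)
    · exact Set.iUnion₂_subset fun i _ =>
        Set.subset_iUnion (fun j : ℤ => hpow f j '' A) ((i:ℕ):ℤ)
  have hYcl : IsClosed (⋃ i : ℤ, hpow f i '' A) := by
    rw [hYfin]
    exact isClosed_biUnion_finset fun i _ => (hpow f _).isClosedMap _ hcl
  have hYne : (⋃ i : ℤ, hpow f i '' A).Nonempty := by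
    refine hne.mono ?_
    conv_lhs => rw [← image_hpow_zero f A]
    exact Set.subset_iUnion (fun j : ℤ => hpow f j '' A) 0
  have hYinv : f '' (⋃ i : ℤ, hpow f i '' A) = ⋃ i : ℤ, hpow f i '' A := by
    apply subset_antisymm
    · rw [Set.image_iUnion]
      refine Set.iUnion_subset fun i => ?_
      rw [f_image_hpow]
      exact Set.subset_iUnion (fun j : ℤ => hpow f j '' A) (i+1)
    · refine Set.iUnion_subset fun i => ?_
      have h1 : hpow f i '' A = f '' (hpow f (i-1) '' A) := by
        rw [f_image_hpow, sub_add_cancel]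
      rw [h1]
      exact Set.image_mono (Set.subset_iUnion (fun j : ℤ => hpow f j '' A) (i-1))
  have hYuniv : (⋃ i : ℤ, hpow f i '' A) = univ :=
    closed_inv_eq_univ f h hYne hYcl hYinv
  -- the intersection dichotomy from connectedness
  have hex : ∃ i : ℕ, 1 ≤ i ∧ i < P ∧ (A ∩ hpow f ((i:ℕ):ℤ) '' A).Nonempty := by
    by_contra hcon
    have hdisj : ∀ i : ℕ, 1 ≤ i → i < P → A ∩ hpow f ((i:ℕ):ℤ) '' A = ∅ := by
      intro i h1 h2
      by_contra hne2
      exact hcon ⟨i, h1, h2, Set.nonempty_iff_ne_empty.mpr hne2⟩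
    have hBcl : IsClosed (⋃ i ∈ Finset.Ico 1 P, hpow f ((i:ℕ):ℤ) '' A) :=
      isClosed_biUnion_finset fun i _ => (hpow f _).isClosedMap _ hcl
    have hunion : A ∪ (⋃ i ∈ Finset.Ico 1 P, hpow f ((i:ℕ):ℤ) '' A) = univ := by
      apply eq_univ_of_univ_subset
      rw [← hYuniv, hYfin]
      refine Set.iUnion₂_subset fun i hi => ?_
      rcases Nat.eq_zero_or_pos i with h0 | h0
      · subst h0
        intro z hz
        left
        rwa [show ((0:ℕ):ℤ) = 0 from rfl, image_hpow_zero] at hz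
      · intro z hz
        right
        exact Set.mem_biUnion (Finset.mem_Ico.mpr ⟨h0, Finset.mem_range.mp hi⟩) hz
    have hdisj2 : A ∩ (⋃ i ∈ Finset.Ico 1 P, hpow f ((i:ℕ):ℤ) '' A) = ∅ := by
      apply Set.eq_empty_iff_forall_notMem.mpr
      rintro z ⟨hzA, hzB⟩
      obtain ⟨i, hi, hzi⟩ := Set.mem_iUnion₂.mp hzB
      exact Set.eq_empty_iff_forall_notMem.mp
        (hdisj i (Finset.mem_Ico.mp hi).1 (Finset.mem_Ico.mp hi).2) z ⟨hzA, hzi⟩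
    have hAopen : IsOpen A := by
      have hAc : A = (⋃ i ∈ Finset.Ico 1 P, hpow f ((i:ℕ):ℤ) '' A)ᶜ := by
        apply subset_antisymm
        · intro z hz hzB
          exact Set.eq_empty_iff_forall_notMem.mp hdisj2 z ⟨hz, hzB⟩
        · intro z hz
          rcases (Set.eq_univ_iff_forall.mp hunion z) with hzz | hzz
          · exact hzz
          · exact absurd hzz hz
      rw [hAc]
      exact hBcl.isOpen_compl
    rcases isClopen_iff.mp ⟨hcl, hAopen⟩ with h0 | h0
    · exact hne.ne_empty h0
    · exact hA h0
  obtain ⟨i, hi1, hiP, hint⟩ := hex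
  have hIcomm : hpow f (P:ℤ) '' (hpow f (i:ℤ) '' A) = hpow f (i:ℤ) '' A := by
    rw [← image_hpow_add, add_comm, image_hpow_add, hinv]
  have hC0inv : hpow f (P:ℤ) '' (A ∩ hpow f (i:ℤ) '' A) = A ∩ hpow f (i:ℤ) '' A := by
    rw [Set.image_inter (hpow f (P:ℤ)).injective, hinv, hIcomm]
  have hC0cl : IsClosed (A ∩ hpow f (i:ℤ) '' A) :=
    hcl.inter ((hpow f _).isClosedMap _ hcl)
  have hC0A : A ∩ hpow f (i:ℤ) '' A = A :=
    hmin _ inter_subset_left hint hC0cl hC0inv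
  have hDsub : hpow f (-(i:ℤ)) '' (A ∩ hpow f (i:ℤ) '' A) ⊆ A := by
    have h1 : hpow f (-(i:ℤ)) '' (hpow f (i:ℤ) '' A) = A := by
      rw [← image_hpow_add, show -(i:ℤ) + (i:ℤ) = 0 from by ring, image_hpow_zero]
    exact (Set.image_mono inter_subset_right).trans h1.subset
  have hDne : (hpow f (-(i:ℤ)) '' (A ∩ hpow f (i:ℤ) '' A)).Nonempty := hint.image _
  have hDcl : IsClosed (hpow f (-(i:ℤ)) '' (A ∩ hpow f (i:ℤ) '' A)) :=
    (hpow f _).isClosedMap _ hC0cl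
  have hDinv : hpow f (P:ℤ) '' (hpow f (-(i:ℤ)) '' (A ∩ hpow f (i:ℤ) '' A)) =
      hpow f (-(i:ℤ)) '' (A ∩ hpow f (i:ℤ) '' A) := by
    rw [← image_hpow_add, add_comm, image_hpow_add, hC0inv]
  have hDA : hpow f (-(i:ℤ)) '' (A ∩ hpow f (i:ℤ) '' A) = A :=
    hmin _ hDsub hDne hDcl hDinv
  have hC0B : A ∩ hpow f (i:ℤ) '' A = hpow f (i:ℤ) '' A := by
    conv_rhs => rw [← hDA, ← image_hpow_add, show (i:ℤ) + -(i:ℤ) = 0 from by ring,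
      image_hpow_zero]
  have hiA : hpow f (i:ℤ) '' A = A := by rw [← hC0B, hC0A]
  have hd0 : 0 < Nat.gcd i P := Nat.gcd_pos_of_pos_left P hi1
  have hdlei : Nat.gcd i P ≤ i := Nat.le_of_dvd hi1 (Nat.gcd_dvd_left i P)
  have hdP : Nat.gcd i P < P := lt_of_le_of_lt hdlei hiP
  have hdinv : hpow f ((Nat.gcd i P : ℕ):ℤ) '' A = A := by
    have hb : ((Nat.gcd i P : ℕ):ℤ) =
        (i:ℤ) * Int.gcdA (i:ℤ) (P:ℤ) + (P:ℤ) * Int.gcdB (i:ℤ) (P:ℤ) := by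
      have h1 := Int.gcd_eq_gcd_ab (i:ℤ) (P:ℤ)
      rwa [Int.gcd_natCast_natCast] at h1
    rw [hb, image_hpow_add,
      show (P:ℤ) * Int.gcdB (i:ℤ) (P:ℤ) = Int.gcdB (i:ℤ) (P:ℤ) * (P:ℤ) from mul_comm _ _,
      image_hpow_mul f _ _ hinv,
      show (i:ℤ) * Int.gcdA (i:ℤ) (P:ℤ) = Int.gcdA (i:ℤ) (P:ℤ) * (i:ℤ) from mul_comm _ _,
      image_hpow_mul f _ _ hiA]
  have hmind : ∀ C, C ⊆ A → C.Nonempty → IsClosed C →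
      hpow f ((Nat.gcd i P : ℕ):ℤ) '' C = C → C = A := by
    intro C hCA hCne hCcl hCinv
    obtain ⟨k, hk⟩ := Nat.gcd_dvd_right i P
    have hPk : (P:ℤ) = (k:ℤ) * ((Nat.gcd i P : ℕ):ℤ) := by
      rw [Nat.mul_comm] at hk
      exact_mod_cast congrArg (Nat.cast : ℕ → ℤ) hk
    refine hmin C hCA hCne hCcl ?_
    rw [hPk]
    exact image_hpow_mul f _ _ hCinv
  exact hA (IH (Nat.gcd i P) hdP hd0 A hne hcl hdinv hmind)

theorem stmt9 [CompactSpace X] [ConnectedSpace X] [Nontrivial X]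
    (f : X ≃ₜ X) (h : MinimalHomeo f) : ∀ x : X, ¬ ShadowablePoint f x := by
  intro x hx
  obtain ⟨q, hq⟩ := exists_ne x
  have hD : 0 < dist x q := dist_pos.mpr (Ne.symm hq)
  obtain ⟨δ, hδ0, hsh⟩ := hx (dist x q / 2) (by linarith)
  obtain ⟨P, hP, hret⟩ := return_close f h x hδ0
  have hP0 : (0:ℤ) < (P:ℤ) := by exact_mod_cast hP
  have hξ0 : (fun n : ℤ => hpow f (n % (P:ℤ)) x) 0 = x := by
    show hpow f ((0:ℤ) % (P:ℤ)) x = x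
    rw [Int.zero_emod]
    rfl
  have hpo : IsPseudoOrbit f δ (fun n : ℤ => hpow f (n % (P:ℤ)) x) := by
    intro n
    have h0 : 0 ≤ n % (P:ℤ) := Int.emod_nonneg n hP0.ne'
    have hlt : n % (P:ℤ) < (P:ℤ) := Int.emod_lt_of_pos n hP0
    have hmod : (n+1) % (P:ℤ) = (n % (P:ℤ) + 1) % (P:ℤ) := by
      conv_lhs => rw [show n = (P:ℤ) * (n / (P:ℤ)) + n % (P:ℤ) from
        (Int.mul_ediv_add_emod n (P:ℤ)).symm]
      rw [show (P:ℤ) * (n / (P:ℤ)) + n % (P:ℤ) + 1 =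
          (n % (P:ℤ) + 1) + (P:ℤ) * (n / (P:ℤ)) from by ring,
        Int.add_mul_emod_self_left]
    show dist (f (hpow f (n % (P:ℤ)) x)) (hpow f ((n+1) % (P:ℤ)) x) ≤ δ
    rcases lt_or_eq_of_le (Int.add_one_le_iff.mpr hlt) with hc | hc
    · rw [hmod, Int.emod_eq_of_lt (by omega) hc, hpow_succ, dist_self]
      exact hδ0.le
    · rw [hmod, hc, Int.emod_self]
      have heq : f (hpow f (n % (P:ℤ)) x) = hpow f (P:ℤ) x := by
        rw [← hpow_succ, hc]
      rw [heq]
      exact hret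
  obtain ⟨y, hy⟩ := hsh _ hpo hξ0
  have hball : ∀ k : ℤ, hpow f (k * (P:ℤ)) y ∈ closedBall x (dist x q / 2) := by
    intro k
    have h1 : dist (hpow f (k * (P:ℤ)) y) (hpow f ((k * (P:ℤ)) % (P:ℤ)) x) ≤ dist x q / 2 :=
      hy (k * (P:ℤ))
    rw [Int.mul_emod_left] at h1
    exact mem_closedBall.mpr h1
  have hS0ne : (range (fun k : ℤ => hpow f (k * (P:ℤ)) y)).Nonempty := range_nonempty _
  have hΛball : closure (range (fun k : ℤ => hpow f (k * (P:ℤ)) y)) ⊆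
      closedBall x (dist x q / 2) :=
    closure_minimal (range_subset_iff.mpr hball) Metric.isClosed_closedBall
  have hΛinv : hpow f (P:ℤ) '' closure (range (fun k : ℤ => hpow f (k * (P:ℤ)) y)) =
      closure (range (fun k : ℤ => hpow f (k * (P:ℤ)) y)) := by
    have hgr : hpow f (P:ℤ) '' (range fun k : ℤ => hpow f (k * (P:ℤ)) y) =
        range fun k : ℤ => hpow f (k * (P:ℤ)) y := by
      apply subset_antisymm
      · rintro _ ⟨_, ⟨k, rfl⟩, rfl⟩
        refine ⟨k+1, ?_⟩
        show hpow f ((k+1) * (P:ℤ)) y = hpow f (P:ℤ) (hpow f (k * (P:ℤ)) y)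
        rw [show (k+1) * (P:ℤ) = (P:ℤ) + k * (P:ℤ) from by ring, hpow_add]
      · rintro _ ⟨k, rfl⟩
        refine ⟨hpow f ((k-1) * (P:ℤ)) y, ⟨k-1, rfl⟩, ?_⟩
        show hpow f (P:ℤ) (hpow f ((k-1) * (P:ℤ)) y) = hpow f (k * (P:ℤ)) y
        rw [← hpow_add, show (P:ℤ) + (k-1) * (P:ℤ) = k * (P:ℤ) from by ring]
    rw [(hpow f (P:ℤ)).image_closure, hgr]
  obtain ⟨A, hAΛ, hAne, hAcl, hAinv, hAmin⟩ :=
    exists_min_invariant (hpow f (P:ℤ)) (closure (range (fun k : ℤ => hpow f (k * (P:ℤ)) y)))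
      hS0ne.closure isClosed_closure hΛinv
  have hAuniv : A = univ := min_set_univ f h P hP A hAne hAcl hAinv hAmin
  have hqΛ : q ∈ closedBall x (dist x q / 2) :=
    hΛball (hAΛ (hAuniv ▸ mem_univ q))
  rw [mem_closedBall, dist_comm] at hqΛ
  linarith
end
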